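/- (Chain rule for cyclic derivatives, free algebra version) Let F = k⟨x₁,…,xₙ⟩ and let H : F → F be a k-algebra endomorphism with H(xⱼ) = hⱼ. Writing the double derivation ∂hⱼ/∂xᵢ ∈ F ⊗ F in Sweedler notation as (∂hⱼ/∂xᵢ)' ⊗ (∂hⱼ/∂xᵢ)'', then for every φ ∈ F and every i: D_{x_i}(H(φ)) = Σⱼ (∂hⱼ/∂xᵢ)'' · H(D_{x_j}(φ)) · (∂hⱼ/∂xᵢ)'. -/

import Mathlib

open TensorProduct

noncomputable section

def sandwich {k A : Type*} [CommRing k] [Ring A] [Algebra k A] (m : A) :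
    A ⊗[k] A →ₗ[k] A :=
  TensorProduct.lift
    (LinearMap.mk₂ k (fun a b => b * m * a)
      (fun a a' b => by noncomm_ring)
      (fun c a b => by rw [mul_smul_comm])
      (fun a b b' => by noncomm_ring)
      (fun c a b => by rw [smul_mul_assoc, smul_mul_assoc]))

section Aux

variable {k A : Type*} [CommRing k] [Ring A] [Algebra k A]

lemma sandwich_tmul (m a b : A) : sandwich m (a ⊗ₜ[k] b) = b * m * a := rfl

lemma sandwich_add (m m' : A) (t : A ⊗[k] A) :
    sandwich (m + m') t = sandwich m t + sandwich m' t := by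
  induction t using TensorProduct.induction_on with
  | zero => simp
  | tmul a b => simp [sandwich_tmul, mul_add, add_mul]
  | add x y hx hy => simp [map_add, hx, hy]; abel

lemma sandwich_zero (t : A ⊗[k] A) : sandwich (0 : A) t = 0 := by
  induction t using TensorProduct.induction_on with
  | zero => simp
  | tmul a b => simp [sandwich_tmul]
  | add x y hx hy => simp [map_add, hx, hy]

lemma map_right_eq (m : A) (x : A ⊗[k] A) :
    TensorProduct.map LinearMap.id (LinearMap.mulRight k m) x = x * (1 ⊗ₜ[k] m) := by
  induction x using TensorProduct.induction_on with
  | zero => simp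
  | tmul a b => simp [Algebra.TensorProduct.tmul_mul_tmul]
  | add x y hx hy => simp [hx, hy, add_mul]

lemma map_left_eq (m : A) (x : A ⊗[k] A) :
    TensorProduct.map (LinearMap.mulLeft k m) LinearMap.id x = (m ⊗ₜ[k] 1) * x := by
  induction x using TensorProduct.induction_on with
  | zero => simp
  | tmul a b => simp [Algebra.TensorProduct.tmul_mul_tmul]
  | add x y hx hy => simp [hx, hy, mul_add]

def psi (H : A →ₐ[k] A) (t : A ⊗[k] A) : A ⊗[k] A →ₗ[k] A ⊗[k] A :=
  TensorProduct.lift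
    (LinearMap.mk₂ k (fun a b => ((H a) ⊗ₜ[k] (1 : A)) * t * ((1 : A) ⊗ₜ[k] (H b)))
      (fun a a' b => by simp [map_add, add_tmul, add_mul]
      )
      (fun c a b => by
        simp only [map_smul]
        rw [← smul_tmul', smul_mul_assoc, smul_mul_assoc])
      (fun a b b' => by simp [map_add, tmul_add, mul_add])
      (fun c a b => by simp [map_smul, tmul_smul, mul_smul_comm]))

lemma psi_tmul (H : A →ₐ[k] A) (t : A ⊗[k] A) (a b : A) :
    psi H t (a ⊗ₜ[k] b) = ((H a) ⊗ₜ[k] (1 : A)) * t * ((1 : A) ⊗ₜ[k] (H b)) := rfl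

lemma psi_mul_right (H : A →ₐ[k] A) (t : A ⊗[k] A) (b : A) (s : A ⊗[k] A) :
    psi H t (s * (1 ⊗ₜ[k] b)) = psi H t s * (1 ⊗ₜ[k] (H b)) := by
  induction s using TensorProduct.induction_on with
  | zero => simp
  | tmul u v =>
      simp [psi_tmul, Algebra.TensorProduct.tmul_mul_tmul, map_mul, mul_assoc]
  | add x y hx hy => simp [add_mul, hx, hy]

lemma psi_mul_left (H : A →ₐ[k] A) (t : A ⊗[k] A) (a : A) (s : A ⊗[k] A) :
    psi H t ((a ⊗ₜ[k] 1) * s) = ((H a) ⊗ₜ[k] (1 : A)) * psi H t s := by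
  induction s using TensorProduct.induction_on with
  | zero => simp
  | tmul u v =>
      simp only [psi_tmul, Algebra.TensorProduct.tmul_mul_tmul, map_mul, one_mul, mul_one]
      rw [← mul_assoc, ← mul_assoc, Algebra.TensorProduct.tmul_mul_tmul, mul_one]
  | add x y hx hy => simp [mul_add, hx, hy]

lemma sandwich_psi (H : A →ₐ[k] A) (t s : A ⊗[k] A) :
    LinearMap.mul' k A ((TensorProduct.comm k A A) (psi H t s)) =
      sandwich (H (LinearMap.mul' k A ((TensorProduct.comm k A A) s))) t := by
  induction s using TensorProduct.induction_on with
  | zero => simp [sandwich_zero]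
  | tmul u v =>
      induction t using TensorProduct.induction_on with
      | zero => simp [psi_tmul]
      | tmul p q =>
          simp [psi_tmul, Algebra.TensorProduct.tmul_mul_tmul, sandwich_tmul, map_mul,
            LinearMap.mul'_apply, mul_assoc]
      | add x y hx hy =>
          simp only [psi_tmul] at hx hy ⊢
          simp only [mul_add, add_mul, map_add, hx, hy]
  | add x y hx hy =>
      simp [map_add, hx, hy, sandwich_add]

end Aux

theorem chain_rule_cyclic_derivative
    {k : Type*} [CommRing k] {n : ℕ}
    (δ : Fin n → (FreeAlgebra k (Fin n) →ₗ[k]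
      FreeAlgebra k (Fin n) ⊗[k] FreeAlgebra k (Fin n)))
    (hLeib : ∀ i (a b : FreeAlgebra k (Fin n)), δ i (a * b) =
      TensorProduct.map LinearMap.id (LinearMap.mulRight k b) (δ i a) +
      TensorProduct.map (LinearMap.mulLeft k a) LinearMap.id (δ i b))
    (hgen : ∀ i j, δ i (FreeAlgebra.ι k j) =
      if i = j then (1 : FreeAlgebra k (Fin n)) ⊗ₜ[k] 1 else 0)
    (H : FreeAlgebra k (Fin n) →ₐ[k] FreeAlgebra k (Fin n))
    (φ : FreeAlgebra k (Fin n)) (i : Fin n) :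
    LinearMap.mul' k (FreeAlgebra k (Fin n))
        ((TensorProduct.comm k _ _) (δ i (H φ))) =
      ∑ j : Fin n,
        sandwich
          (H (LinearMap.mul' k (FreeAlgebra k (Fin n))
            ((TensorProduct.comm k _ _) (δ j φ))))
          (δ i (H (FreeAlgebra.ι k j))) := by
  set F := FreeAlgebra k (Fin n)
  -- Leibniz rule restated in ring form
  have hLeib' : ∀ i' (a b : F), δ i' (a * b) =
      δ i' a * (1 ⊗ₜ[k] b) + (a ⊗ₜ[k] 1) * δ i' b := by
    intro i' a b
    rw [hLeib i' a b, map_right_eq, map_left_eq]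
  have hone : ∀ i', δ i' (1 : F) = 0 := by
    intro i'
    have := hLeib' i' 1 1
    rw [mul_one] at this
    rw [show ((1:F) ⊗ₜ[k] (1:F)) = (1 : F ⊗[k] F) from (Algebra.TensorProduct.one_def).symm,
      mul_one, one_mul] at this
    exact left_eq_add.mp this
  -- chain rule for the double derivation
  have key : ∀ ψ : F, δ i (H ψ) =
      ∑ j : Fin n, psi H (δ i (H (FreeAlgebra.ι k j))) (δ j ψ) := by
    intro ψ
    induction ψ using FreeAlgebra.induction with
    | grade0 r =>
        simp [Algebra.algebraMap_eq_smul_one, map_smul, hone]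
    | grade1 j₀ =>
        have hps : ∀ j : Fin n,
            psi H (δ i (H (FreeAlgebra.ι k j)))
              (if j = j₀ then (1:F) ⊗ₜ[k] (1:F) else 0) =
            if j = j₀ then δ i (H (FreeAlgebra.ι k j)) else 0 := by
          intro j
          split
          · rw [psi_tmul, map_one, ← Algebra.TensorProduct.one_def, one_mul, mul_one]
          · simp
        simp only [hgen, hps, Finset.sum_ite_eq', Finset.mem_univ, if_true]
    | mul a b ha hb =>
        rw [map_mul, hLeib' i, ha, hb, Finset.sum_mul, Finset.mul_sum,
          ← Finset.sum_add_distrib]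
        refine Finset.sum_congr rfl fun j _ => ?_
        rw [hLeib' j, map_add, psi_mul_right, psi_mul_left]
    | add a b ha hb =>
        simp only [map_add, ha, hb, ← Finset.sum_add_distrib]
  rw [key, map_sum, map_sum]
  exact Finset.sum_congr rfl fun j _ => sandwich_psi H _ _

end
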